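/- Let S be any n×n matrix over ℤ[t,t⁻¹]. Form the (n+1)×(n+1) matrix J obtained from the block matrix with S in the top-left n×n corner padded by a last row (0,…,0,1) and last column (0,…,0,1)ᵀ (with 1 in the corner), and let Σ be the (n+1)×(n+1) matrix equal to the identity except that its bottom-right 2×2 block is [[1-t, t],[1, 0]]. Then det(J·Σ − I) = − det(S − I), where I denotes the identity matrix of the appropriate size. -/

import Mathlib

open Matrix LaurentPolynomial

/-- Pad an `n × n` matrix with a last row `(0,…,0,1)` and last column `(0,…,0,1)ᵀ`. -/
noncomputable def pad (n : ℕ) (S : Matrix (Fin n) (Fin n) (LaurentPolynomial ℤ)) :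
    Matrix (Fin (n + 1)) (Fin (n + 1)) (LaurentPolynomial ℤ) :=
  Matrix.of fun i j =>
    if hi : (i : ℕ) < n then
      if hj : (j : ℕ) < n then S ⟨i, hi⟩ ⟨j, hj⟩ else 0
    else if (j : ℕ) < n then 0 else 1

/-- The `(n+1) × (n+1)` identity except the bottom-right `2 × 2` block is
`[[1-t, t], [1, 0]]` (requires `1 ≤ n`). -/
noncomputable def sigmaStab (n : ℕ) (hn : 1 ≤ n) :
    Matrix (Fin (n + 1)) (Fin (n + 1)) (LaurentPolynomial ℤ) :=
  1 + single ⟨n - 1, by omega⟩ ⟨n - 1, by omega⟩ (-(T 1))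
    + single ⟨n - 1, by omega⟩ ⟨n, by omega⟩ (T 1)
    + single ⟨n, by omega⟩ ⟨n - 1, by omega⟩ 1
    + single ⟨n, by omega⟩ ⟨n, by omega⟩ (-1)

set_option maxHeartbeats 2000000 in
theorem stmt3 (n : ℕ) (hn : 1 ≤ n) (S : Matrix (Fin n) (Fin n) (LaurentPolynomial ℤ)) :
    (pad n S * sigmaStab n hn - 1).det = -(S - 1).det := by
  set p : Fin (n + 1) := ⟨n - 1, by omega⟩ with hp
  set q : Fin (n + 1) := ⟨n, by omega⟩ with hq
  have hpq : p ≠ q := by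
    simp only [hp, hq, Ne, Fin.mk.injEq]; omega
  set M : Matrix (Fin (n + 1)) (Fin (n + 1)) (LaurentPolynomial ℤ) :=
    pad n S * sigmaStab n hn - 1 with hMdef
  have hMe : ∀ i j, M i j =
      (if j = p then pad n S i p * (1 - T 1) + pad n S i q
       else if j = q then pad n S i p * T 1
       else pad n S i j) - (if i = j then 1 else 0) := by
    intro i j
    simp only [hMdef, sigmaStab, mul_add, mul_one, Matrix.sub_apply, Matrix.add_apply, one_apply]
    by_cases hjp : j = p
    · subst hjp
      rw [mul_single_apply_same, mul_single_apply_same,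
        mul_single_apply_of_ne _ _ _ _ _ hpq,
        mul_single_apply_of_ne _ _ _ _ _ hpq]
      rw [if_pos rfl]
      ring
    · by_cases hjq : j = q
      · subst hjq
        rw [mul_single_apply_same, mul_single_apply_same,
          mul_single_apply_of_ne _ _ _ _ _ hpq.symm,
          mul_single_apply_of_ne _ _ _ _ _ hpq.symm]
        rw [if_neg hpq.symm, if_pos rfl]
        ring
      · rw [mul_single_apply_of_ne _ _ _ _ _ hjp,
          mul_single_apply_of_ne _ _ _ _ _ hjq,
          mul_single_apply_of_ne _ _ _ _ _ hjp,
          mul_single_apply_of_ne _ _ _ _ _ hjq]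
        rw [if_neg hjp, if_neg hjq]
        ring
  have hMp : ∀ i, M i p = pad n S i p * (1 - T 1) + pad n S i q
      - (if i = p then 1 else 0) := by
    intro i; rw [hMe, if_pos rfl]
  have hMq : ∀ i, M i q = pad n S i p * T 1 - (if i = q then 1 else 0) := by
    intro i; rw [hMe, if_neg hpq.symm, if_pos rfl]
  have hMo : ∀ i j, j ≠ p → j ≠ q →
      M i j = pad n S i j - (if i = j then 1 else 0) := by
    intro i j h1 h2; rw [hMe, if_neg h1, if_neg h2]
  rw [← det_updateCol_add_self M hpq,
    ← det_submatrix_equiv_self (finSumFinEquiv (m := n) (n := 1))]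
  have hblock : (updateCol M p fun k => M k p + M k q).submatrix
        finSumFinEquiv finSumFinEquiv
      = fromBlocks (S - 1)
          (Matrix.of fun i _ => T 1 * S i ⟨n - 1, by omega⟩) 0 (-1) := by
    apply Matrix.ext
    intro a b
    cases a with
    | inl i =>
      have hi : ((Fin.castAdd 1 i : Fin (n + 1)) : ℕ) = (i : ℕ) := rfl
      have h1 : pad n S (Fin.castAdd 1 i) p = S i ⟨n - 1, by omega⟩ := by
        simp only [pad, hp, Matrix.of_apply]
        rw [dif_pos (by omega : ((Fin.castAdd 1 i : Fin (n + 1)) : ℕ) < n),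
          dif_pos (by omega : n - 1 < n)]
        congr 1 <;> exact Fin.ext rfl
      have h2 : pad n S (Fin.castAdd 1 i) q = 0 := by
        simp only [pad, hq, Matrix.of_apply]
        rw [dif_pos (by omega : ((Fin.castAdd 1 i : Fin (n + 1)) : ℕ) < n),
          dif_neg (by omega : ¬ (n < n))]
      have hiq : (Fin.castAdd 1 i : Fin (n + 1)) ≠ q := by
        simp only [Ne, Fin.ext_iff, hq, hi]; omega
      cases b with
      | inl j =>
        simp only [submatrix_apply, finSumFinEquiv_apply_left, fromBlocks_apply₁₁,
          updateCol_apply, Matrix.sub_apply, one_apply]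
        have hj : ((Fin.castAdd 1 j : Fin (n + 1)) : ℕ) = (j : ℕ) := rfl
        by_cases hjp : (j : ℕ) = n - 1
        · have hcj : (Fin.castAdd 1 j : Fin (n + 1)) = p := by
            apply Fin.ext; simp [hp, hj, hjp]
          have hsj : (⟨n - 1, by omega⟩ : Fin n) = j := by
            apply Fin.ext; simp [hjp]
          rw [if_pos hcj, hMp, hMq, h1, h2, if_neg hiq, hsj]
          have hip : ((Fin.castAdd 1 i : Fin (n + 1)) = p) ↔ (i = j) := by
            simp only [Fin.ext_iff, hp, hi, hj]; omega
          by_cases hij : i = j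
          · rw [if_pos (hip.mpr hij), if_pos hij]; ring
          · rw [if_neg (fun h => hij (hip.mp h)), if_neg hij]; ring
        · have hcj : (Fin.castAdd 1 j : Fin (n + 1)) ≠ p := by
            simp only [Ne, Fin.ext_iff, hp, hj]; omega
          have hcjq : (Fin.castAdd 1 j : Fin (n + 1)) ≠ q := by
            simp only [Ne, Fin.ext_iff, hq, hj]; omega
          rw [if_neg hcj, hMo _ _ hcj hcjq]
          have h3 : pad n S (Fin.castAdd 1 i) (Fin.castAdd 1 j) = S i j := by
            simp only [pad, Matrix.of_apply]
            rw [dif_pos (by omega : ((Fin.castAdd 1 i : Fin (n + 1)) : ℕ) < n),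
              dif_pos (by omega : ((Fin.castAdd 1 j : Fin (n + 1)) : ℕ) < n)]
            congr 1 <;> exact Fin.ext rfl
          have hij : ((Fin.castAdd 1 i : Fin (n + 1)) = Fin.castAdd 1 j) ↔ (i = j) := by
            simp [Fin.ext_iff, hi, hj]
          rw [h3]
          by_cases h : i = j
          · rw [if_pos (hij.mpr h), if_pos h]
          · rw [if_neg (fun hh => h (hij.mp hh)), if_neg h]
      | inr k =>
        simp only [submatrix_apply, finSumFinEquiv_apply_left, finSumFinEquiv_apply_right,
          fromBlocks_apply₁₂, updateCol_apply, Matrix.of_apply]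
        have hk0 : (k : ℕ) = 0 := by omega
        have hj : ((Fin.natAdd n k : Fin (n + 1)) : ℕ) = n := by simp [hk0]
        have hcj : (Fin.natAdd n k : Fin (n + 1)) ≠ p := by
          simp only [Ne, Fin.ext_iff, hp, hj]; omega
        have hcq : (Fin.natAdd n k : Fin (n + 1)) = q := by
          apply Fin.ext; simp [hq, hj]
        have hiq' : (Fin.castAdd 1 i : Fin (n + 1)) ≠ Fin.natAdd n k := by
          simp only [Ne, Fin.ext_iff, hi, hj]; omega
        rw [if_neg hcj, hcq, hMq, h1, if_neg hiq]
        ring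
    | inr k =>
      have hk0 : (k : ℕ) = 0 := by omega
      have hi : ((Fin.natAdd n k : Fin (n + 1)) : ℕ) = n := by simp [hk0]
      have hqpad1 : pad n S (Fin.natAdd n k) p = 0 := by
        simp only [pad, hp, Matrix.of_apply]
        rw [dif_neg (by omega : ¬ ((Fin.natAdd n k : Fin (n + 1)) : ℕ) < n),
          if_pos (by omega : n - 1 < n)]
      have hqpad2 : pad n S (Fin.natAdd n k) q = 1 := by
        simp only [pad, hq, Matrix.of_apply]
        rw [dif_neg (by omega : ¬ ((Fin.natAdd n k : Fin (n + 1)) : ℕ) < n),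
          if_neg (by omega : ¬ (n < n))]
      have hip : (Fin.natAdd n k : Fin (n + 1)) ≠ p := by
        simp only [Ne, Fin.ext_iff, hp, hi]; omega
      have hiq : (Fin.natAdd n k : Fin (n + 1)) = q := by
        apply Fin.ext; simp [hq, hi]
      cases b with
      | inl j =>
        simp only [submatrix_apply, finSumFinEquiv_apply_left, finSumFinEquiv_apply_right,
          fromBlocks_apply₂₁, updateCol_apply, Matrix.zero_apply]
        have hj : ((Fin.castAdd 1 j : Fin (n + 1)) : ℕ) = (j : ℕ) := rfl
        by_cases hjp : (j : ℕ) = n - 1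
        · have hcj : (Fin.castAdd 1 j : Fin (n + 1)) = p := by
            apply Fin.ext; simp [hp, hj, hjp]
          rw [if_pos hcj, hMp, hMq, hqpad1, hqpad2, if_neg hip, if_pos hiq]
          ring
        · have hcj : (Fin.castAdd 1 j : Fin (n + 1)) ≠ p := by
            simp only [Ne, Fin.ext_iff, hp, hj]; omega
          have hcjq : (Fin.castAdd 1 j : Fin (n + 1)) ≠ q := by
            simp only [Ne, Fin.ext_iff, hq, hj]; omega
          rw [if_neg hcj, hMo _ _ hcj hcjq]
          have h1 : pad n S (Fin.natAdd n k) (Fin.castAdd 1 j) = 0 := by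
            simp only [pad, Matrix.of_apply]
            rw [dif_neg (by omega : ¬ ((Fin.natAdd n k : Fin (n + 1)) : ℕ) < n),
              if_pos (by omega : ((Fin.castAdd 1 j : Fin (n + 1)) : ℕ) < n)]
          have hne : (Fin.natAdd n k : Fin (n + 1)) ≠ Fin.castAdd 1 j := by
            simp only [Ne, Fin.ext_iff, hi, hj]; omega
          rw [h1, if_neg hne]
          ring
      | inr l =>
        simp only [submatrix_apply, finSumFinEquiv_apply_right, fromBlocks_apply₂₂,
          updateCol_apply, Matrix.neg_apply, Matrix.one_apply]
        have hl0 : (l : ℕ) = 0 := by omega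
        have hj : ((Fin.natAdd n l : Fin (n + 1)) : ℕ) = n := by simp [hl0]
        have hcj : (Fin.natAdd n l : Fin (n + 1)) ≠ p := by
          simp only [Ne, Fin.ext_iff, hp, hj]; omega
        have hcq : (Fin.natAdd n l : Fin (n + 1)) = q := by
          apply Fin.ext; simp [hq, hj]
        have hkl : k = l := by apply Fin.ext; omega
        have hiq2 : (Fin.natAdd n k : Fin (n + 1)) = Fin.natAdd n l := by rw [hkl]
        rw [if_neg hcj, hcq, hMq, hqpad1, if_pos hiq, if_pos hkl]
        ring
  rw [hblock, det_fromBlocks_zero₂₁]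
  have hdet1 : ((-1 : Matrix (Fin 1) (Fin 1) (LaurentPolynomial ℤ))).det = -1 := by
    simp [det_fin_one]
  rw [hdet1]
  ring
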